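/- arXiv:2004.03029 — 4 statements merged into one kernel-verified Lean document; each statement's English description precedes it below -/
import Mathlib

section
/- The map F : ℝⁿ → ℝⁿ defined componentwise by F(x)ᵢ = max(g, xᵢ), with g ≥ 0 fixed, is Newton (slantly) differentiable on ℝⁿ with generalized derivative G(x) = diag(m(x)), where m(x)ᵢ = 1 if xᵢ ≥ g and m(x)ᵢ = 0 if xᵢ < g; i.e., lim_{h→0} ‖F(x+h) − F(x) − G(x+h)h‖/‖h‖ = 0 for all x ∈ ℝⁿ. -/
lemma abs_apply_le_norm' {n : ℕ} (h : EuclideanSpace ℝ (Fin n)) (i : Fin n) :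
    |h i| ≤ ‖h‖ := by
  rw [EuclideanSpace.norm_eq]
  have : |h i| = Real.sqrt (|h i| ^ 2) := by
    rw [Real.sqrt_sq (abs_nonneg _)]
  rw [this]
  apply Real.sqrt_le_sqrt
  exact Finset.single_le_sum (f := fun j => |h j| ^ 2)
    (fun j _ => sq_nonneg _) (Finset.mem_univ i)

/-- The componentwise map F(x)ᵢ = max(g, xᵢ) on ℝⁿ is Newton (slantly)
differentiable with generalized derivative G(x) = diag(m(x)), where
m(x)ᵢ = 1 if xᵢ ≥ g and 0 otherwise:
lim_{h→0} ‖F(x+h) − F(x) − G(x+h)h‖/‖h‖ = 0 for every x. -/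
theorem stmt_3 (n : ℕ) (g : ℝ) (hg : 0 ≤ g)
    (F : EuclideanSpace ℝ (Fin n) → EuclideanSpace ℝ (Fin n))
    (hF : ∀ x i, F x i = max g (x i))
    (m : EuclideanSpace ℝ (Fin n) → Fin n → ℝ)
    (hm : ∀ x i, m x i = if g ≤ x i then 1 else 0) :
    ∀ x : EuclideanSpace ℝ (Fin n),
      Filter.Tendsto
        (fun h : EuclideanSpace ℝ (Fin n) =>
          ‖F (x + h) - F x - (show EuclideanSpace ℝ (Fin n) from WithLp.toLp 2 fun i => m (x + h) i * h i)‖ / ‖h‖)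
        (nhdsWithin 0 {0}ᶜ) (nhds 0) := by
  intro x
  -- choose ε > 0 with ε ≤ |x i - g| whenever x i ≠ g
  obtain ⟨ε, hε, hεle⟩ : ∃ ε : ℝ, 0 < ε ∧ ∀ i : Fin n, x i ≠ g → ε ≤ |x i - g| := by
    classical
    set s : Finset ℝ := insert (1 : ℝ)
      (Finset.univ.image fun i : Fin n => if x i = g then 1 else |x i - g|) with hs
    have hne : s.Nonempty := ⟨1, Finset.mem_insert_self _ _⟩
    refine ⟨s.min' hne, ?_, ?_⟩
    · apply (Finset.lt_min'_iff s hne).2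
      intro y hy
      rcases Finset.mem_insert.1 hy with rfl | hy
      · norm_num
      · obtain ⟨i, _, rfl⟩ := Finset.mem_image.1 hy
        split
        · norm_num
        · next h => exact abs_pos.2 (sub_ne_zero.2 h)
    · intro i hi
      have : |x i - g| ∈ s := by
        apply Finset.mem_insert_of_mem
        apply Finset.mem_image.2 ⟨i, Finset.mem_univ i, ?_⟩
        simp [hi]
      exact Finset.min'_le s _ this
  have key : ∀ h : EuclideanSpace ℝ (Fin n), ‖h‖ < ε →
      (fun h : EuclideanSpace ℝ (Fin n) =>
        ‖F (x + h) - F x - (show EuclideanSpace ℝ (Fin n) from WithLp.toLp 2 fun i => m (x + h) i * h i)‖ / ‖h‖) h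
        = 0 := by
    intro h hh
    have : F (x + h) - F x - (show EuclideanSpace ℝ (Fin n) from WithLp.toLp 2 fun i => m (x + h) i * h i) = 0 := by
      ext i
      have habs : |h i| < ε := lt_of_le_of_lt (abs_apply_le_norm' h i) hh
      simp only [PiLp.sub_apply, PiLp.toLp_apply, hF, hm, PiLp.add_apply, PiLp.zero_apply]
      by_cases hxi : x i = g
      · simp only [hxi]
        rcases le_or_gt 0 (h i) with h0 | h0
        · rw [if_pos (by linarith), max_eq_right (by linarith), max_self]; ring
        · rw [if_neg (by linarith), max_eq_left (by linarith), max_self]; ring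
      · have hd := hεle i hxi
        rcases lt_or_gt_of_ne hxi with hlt | hgt
        · have : x i + h i < g := by
            rw [abs_of_nonpos (by linarith)] at hd
            cases abs_lt.1 habs; linarith
          show max g (x i + h i) - max g (x i) - (if g ≤ x i + h i then 1 else 0) * h i = 0; rw [if_neg (not_le.2 this), max_eq_left this.le, max_eq_left hlt.le]; ring
        · have : g < x i + h i := by
            rw [abs_of_nonneg (by linarith)] at hd
            cases abs_lt.1 habs; linarith
          show max g (x i + h i) - max g (x i) - (if g ≤ x i + h i then 1 else 0) * h i = 0; rw [if_pos this.le, max_eq_right this.le, max_eq_right hgt.le]; ring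
    simp [this]
  apply Filter.Tendsto.congr' _ tendsto_const_nhds
  have : Metric.ball (0 : EuclideanSpace ℝ (Fin n)) ε ∈ nhdsWithin 0 {0}ᶜ :=
    nhdsWithin_le_nhds (Metric.ball_mem_nhds _ hε)
  filter_upwards [this] with h hh
  exact (key h (by simpa using mem_ball_zero_iff.1 hh)).symm
end

section
/- Let F : ℝˡ → ℝˡ be Newton differentiable on an open neighborhood U of a root x* (F(x*) = 0) with generalized derivative G, and suppose there exists M > 0 with ‖G(y)⁻¹‖ ≤ M for all y ∈ U. Then the semismooth Newton iteration x_{k+1} = x_k − G(x_k)⁻¹ F(x_k) converges superlinearly to x*, provided ‖x₀ − x*‖ is sufficiently small; that is, ‖x_{k+1} − x*‖ / ‖x_k − x*‖ → 0. -/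
/-- Superlinear local convergence of the semismooth Newton method: if F is
Newton (slantly) differentiable on an open neighborhood U of a root x* with
generalized derivative G, each G(y) is invertible with inverse Ginv(y) and
‖Ginv(y)‖ ≤ M uniformly on U, then for initial points sufficiently close to x*
the iteration x_{k+1} = x_k − G(x_k)⁻¹F(x_k) converges to x* and
‖x_{k+1} − x*‖/‖x_k − x*‖ → 0. -/
theorem stmt_5 (l : ℕ)
    (F : EuclideanSpace ℝ (Fin l) → EuclideanSpace ℝ (Fin l))
    (G Ginv : EuclideanSpace ℝ (Fin l) →
      (EuclideanSpace ℝ (Fin l) →L[ℝ] EuclideanSpace ℝ (Fin l)))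
    (U : Set (EuclideanSpace ℝ (Fin l))) (hU : IsOpen U)
    (xstar : EuclideanSpace ℝ (Fin l)) (hxU : xstar ∈ U) (hroot : F xstar = 0)
    (hND : ∀ x ∈ U, Filter.Tendsto
      (fun h : EuclideanSpace ℝ (Fin l) => ‖F (x + h) - F x - G (x + h) h‖ / ‖h‖)
      (nhdsWithin 0 {0}ᶜ) (nhds 0))
    (hinv : ∀ y ∈ U,
      (G y).comp (Ginv y) = ContinuousLinearMap.id ℝ (EuclideanSpace ℝ (Fin l)) ∧
      (Ginv y).comp (G y) = ContinuousLinearMap.id ℝ (EuclideanSpace ℝ (Fin l)))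
    (M : ℝ) (hM : 0 < M) (hbound : ∀ y ∈ U, ‖Ginv y‖ ≤ M) :
    ∃ ε > 0, ∀ x : ℕ → EuclideanSpace ℝ (Fin l),
      ‖x 0 - xstar‖ < ε →
      (∀ k, x (k + 1) = x k - Ginv (x k) (F (x k))) →
      Filter.Tendsto x Filter.atTop (nhds xstar) ∧
      Filter.Tendsto (fun k => ‖x (k + 1) - xstar‖ / ‖x k - xstar‖)
        Filter.atTop (nhds 0) := by
  obtain ⟨δ₀, hδ₀pos, hball⟩ := Metric.isOpen_iff.mp hU xstar hxU
  -- basic key estimate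
  have key : ∀ x ∈ U, ‖(x - Ginv x (F x)) - xstar‖
      ≤ M * ‖F (xstar + (x - xstar)) - F xstar - G (xstar + (x - xstar)) (x - xstar)‖ := by
    intro x hx
    have hxeq : xstar + (x - xstar) = x := by abel
    have h2 : Ginv x (G x (x - xstar)) = x - xstar := by
      have hcomp := (hinv x hx).2
      calc Ginv x (G x (x - xstar)) = ((Ginv x).comp (G x)) (x - xstar) := rfl
        _ = x - xstar := by rw [hcomp]; rfl
    have h1 : x - Ginv x (F x) - xstar = Ginv x (G x (x - xstar) - F x) := by
      rw [map_sub, h2]; abel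
    have h3 : ‖G x (x - xstar) - F x‖
        = ‖F (xstar + (x - xstar)) - F xstar - G (xstar + (x - xstar)) (x - xstar)‖ := by
      rw [hxeq, hroot, sub_zero, ← norm_neg (F x - G x (x - xstar))]
      congr 1; abel
    rw [h1]
    calc ‖Ginv x (G x (x - xstar) - F x)‖ ≤ ‖Ginv x‖ * ‖G x (x - xstar) - F x‖ :=
          (Ginv x).le_opNorm _
      _ ≤ M * ‖F (xstar + (x - xstar)) - F xstar - G (xstar + (x - xstar)) (x - xstar)‖ := by
          rw [h3]
          exact mul_le_mul_of_nonneg_right (hbound x hx) (norm_nonneg _)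
  -- quantitative contraction
  have quant : ∀ η > (0:ℝ), ∃ δ > (0:ℝ), δ ≤ δ₀ ∧ ∀ x : EuclideanSpace ℝ (Fin l),
      ‖x - xstar‖ < δ → x ∈ U ∧ ‖(x - Ginv x (F x)) - xstar‖ ≤ M * η * ‖x - xstar‖ := by
    intro η hη
    have hnd := hND xstar hxU
    rw [Metric.tendsto_nhdsWithin_nhds] at hnd
    obtain ⟨δ₁, hδ₁pos, hδ₁⟩ := hnd η hη
    refine ⟨min δ₀ δ₁, lt_min hδ₀pos hδ₁pos, min_le_left _ _, ?_⟩
    intro x hx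
    have hxU' : x ∈ U := by
      apply hball
      rw [Metric.mem_ball, dist_eq_norm]
      exact lt_of_lt_of_le hx (min_le_left _ _)
    refine ⟨hxU', ?_⟩
    have hN : ‖F (xstar + (x - xstar)) - F xstar - G (xstar + (x - xstar)) (x - xstar)‖
        ≤ η * ‖x - xstar‖ := by
      by_cases hx0 : x - xstar = 0
      · simp [hx0]
      · have := hδ₁ (x := x - xstar) hx0
          (by rw [dist_zero_right]; exact lt_of_lt_of_le hx (min_le_right _ _))
        rw [dist_zero_right] at this
        have hpos : (0:ℝ) < ‖x - xstar‖ := norm_pos_iff.mpr hx0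
        have h4 : ‖F (xstar + (x - xstar)) - F xstar - G (xstar + (x - xstar)) (x - xstar)‖
            / ‖x - xstar‖ < η := lt_of_abs_lt this
        calc _ ≤ (‖F (xstar + (x - xstar)) - F xstar - G (xstar + (x - xstar)) (x - xstar)‖
              / ‖x - xstar‖) * ‖x - xstar‖ := by
                rw [div_mul_cancel₀ _ (ne_of_gt hpos)]
          _ ≤ η * ‖x - xstar‖ := mul_le_mul_of_nonneg_right h4.le hpos.le
    calc ‖(x - Ginv x (F x)) - xstar‖
        ≤ M * ‖F (xstar + (x - xstar)) - F xstar - G (xstar + (x - xstar)) (x - xstar)‖ :=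
          key x hxU'
      _ ≤ M * (η * ‖x - xstar‖) := mul_le_mul_of_nonneg_left hN hM.le
      _ = M * η * ‖x - xstar‖ := by ring
  obtain ⟨δ, hδpos, hδle, hcontr⟩ := quant (1 / (2 * M)) (by positivity)
  have hMη : M * (1 / (2 * M)) = 1 / 2 := by field_simp
  refine ⟨δ, hδpos, fun x hx0 hrec => ?_⟩
  -- all iterates stay in ball and decay geometrically
  have step : ∀ k, ‖x k - xstar‖ < δ ∧ ‖x k - xstar‖ ≤ (1/2)^k * ‖x 0 - xstar‖ := by
    intro k
    induction k with
    | zero => exact ⟨hx0, by simp⟩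
    | succ k ih =>
      obtain ⟨hlt, hle⟩ := ih
      obtain ⟨hkU, hkb⟩ := hcontr (x k) hlt
      have hnext : ‖x (k+1) - xstar‖ ≤ (1/2) * ‖x k - xstar‖ := by
        rw [hrec k]
        calc ‖(x k - Ginv (x k) (F (x k))) - xstar‖
            ≤ M * (1 / (2 * M)) * ‖x k - xstar‖ := hkb
          _ = (1/2) * ‖x k - xstar‖ := by rw [hMη]
      constructor
      · calc ‖x (k+1) - xstar‖ ≤ (1/2) * ‖x k - xstar‖ := hnext
          _ ≤ ‖x k - xstar‖ := by nlinarith [norm_nonneg (x k - xstar)]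
          _ < δ := hlt
      · calc ‖x (k+1) - xstar‖ ≤ (1/2) * ‖x k - xstar‖ := hnext
          _ ≤ (1/2) * ((1/2)^k * ‖x 0 - xstar‖) := by linarith
          _ = (1/2)^(k+1) * ‖x 0 - xstar‖ := by ring
  have hnorm0 : Filter.Tendsto (fun k => ‖x k - xstar‖) Filter.atTop (nhds 0) := by
    have hgeo : Filter.Tendsto (fun k : ℕ => (1/2:ℝ)^k * ‖x 0 - xstar‖)
        Filter.atTop (nhds 0) := by
      have := (tendsto_pow_atTop_nhds_zero_of_lt_one (by norm_num : (0:ℝ) ≤ 1/2)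
        (by norm_num : (1/2:ℝ) < 1)).mul_const ‖x 0 - xstar‖
      simpa using this
    exact squeeze_zero (fun k => norm_nonneg _) (fun k => (step k).2) hgeo
  have hconv : Filter.Tendsto x Filter.atTop (nhds xstar) := by
    rw [tendsto_iff_norm_sub_tendsto_zero]
    exact hnorm0
  refine ⟨hconv, ?_⟩
  rw [Metric.tendsto_atTop]
  intro ε' hε'
  obtain ⟨δ', hδ'pos, _, hc⟩ := quant (ε' / (2 * M)) (by positivity)
  obtain ⟨N, hN⟩ := (Metric.tendsto_atTop.mp hnorm0) δ' hδ'pos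
  refine ⟨N, fun k hk => ?_⟩
  have hlt : ‖x k - xstar‖ < δ' := by
    have := hN k hk
    rwa [dist_zero_right, Real.norm_eq_abs, abs_of_nonneg (norm_nonneg _)] at this
  have hratio : ‖x (k+1) - xstar‖ / ‖x k - xstar‖ ≤ ε' / 2 := by
    by_cases hx0' : x k = xstar
    · have hF : F (x k) = 0 := by rw [hx0']; exact hroot
      have : x (k+1) = xstar := by rw [hrec k, hF, map_zero, sub_zero, hx0']
      rw [this, sub_self, norm_zero, zero_div]
      positivity
    · have hpos : (0:ℝ) < ‖x k - xstar‖ := by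
        rw [norm_pos_iff]; exact sub_ne_zero_of_ne hx0'
      obtain ⟨_, hb⟩ := hc (x k) hlt
      rw [hrec k]
      rw [div_le_iff₀ hpos]
      calc ‖(x k - Ginv (x k) (F (x k))) - xstar‖
          ≤ M * (ε' / (2 * M)) * ‖x k - xstar‖ := hb
        _ = ε' / 2 * ‖x k - xstar‖ := by field_simp
  rw [dist_zero_right, Real.norm_eq_abs,
    abs_of_nonneg (div_nonneg (norm_nonneg _) (norm_nonneg _))]
  linarith
end

section
/- For any vectors E, F ∈ ℝᵐ and scalars g > 0, γ > 0, the map E ↦ γ g E / max(g, γ‖E‖) is globally Lipschitz continuous on ℝᵐ with Lipschitz constant 2γ. -/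
/-- The Huber-regularized multiplier map E ↦ γ g E / max(g, γ‖E‖) is globally
Lipschitz on ℝᵐ (Euclidean norm) with Lipschitz constant 2γ. -/
theorem stmt_12 (m : ℕ) (g γ : ℝ) (hg : 0 < g) (hγ : 0 < γ) :
    ∀ E F : EuclideanSpace ℝ (Fin m),
      ‖(γ * g / max g (γ * ‖E‖)) • E - (γ * g / max g (γ * ‖F‖)) • F‖ ≤
        2 * γ * ‖E - F‖ := by
  intro E F
  set M := max g (γ * ‖E‖) with hM
  set N := max g (γ * ‖F‖) with hN
  have hgM : g ≤ M := le_max_left _ _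
  have hgN : g ≤ N := le_max_left _ _
  have hFN : γ * ‖F‖ ≤ N := le_max_right _ _
  have hM0 : 0 < M := lt_of_lt_of_le hg hgM
  have hN0 : 0 < N := lt_of_lt_of_le hg hgN
  have key : (γ * g / M) • E - (γ * g / N) • F
      = (γ * g / M) • (E - F) + ((γ * g / M) - (γ * g / N)) • F := by
    rw [smul_sub, sub_smul]; abel
  rw [key]
  have hd : (0:ℝ) ≤ ‖E - F‖ := norm_nonneg _
  have hf : (0:ℝ) ≤ ‖F‖ := norm_nonneg _
  have hMN : |M - N| ≤ γ * ‖E - F‖ := by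
    have h1 : |M - N| ≤ |γ * ‖E‖ - γ * ‖F‖| := by
      rw [hM, hN, max_comm g (γ * ‖E‖), max_comm g (γ * ‖F‖)]
      exact abs_max_sub_max_le_abs _ _ _
    have h2 : |γ * ‖E‖ - γ * ‖F‖| = γ * |‖E‖ - ‖F‖| := by
      rw [← mul_sub, abs_mul, abs_of_pos hγ]
    have h3 : |‖E‖ - ‖F‖| ≤ ‖E - F‖ := abs_norm_sub_norm_le _ _
    calc |M - N| ≤ γ * |‖E‖ - ‖F‖| := by rw [← h2]; exact h1
      _ ≤ γ * ‖E - F‖ := by exact mul_le_mul_of_nonneg_left h3 hγ.le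
  have t1 : ‖(γ * g / M) • (E - F)‖ ≤ γ * ‖E - F‖ := by
    rw [norm_smul, Real.norm_eq_abs]
    have ha : |γ * g / M| ≤ γ := by
      rw [abs_of_pos (by positivity)]
      rw [div_le_iff₀ hM0]
      nlinarith
    exact mul_le_mul_of_nonneg_right ha hd
  have t2 : ‖((γ * g / M) - (γ * g / N)) • F‖ ≤ γ * ‖E - F‖ := by
    rw [norm_smul, Real.norm_eq_abs]
    have hb : |γ * g / M - γ * g / N| = γ * g * |N - M| / (M * N) := by
      rw [div_sub_div _ _ (ne_of_gt hM0) (ne_of_gt hN0), abs_div,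
        abs_of_pos (mul_pos hM0 hN0),
        show γ * g * N - M * (γ * g) = γ * g * (N - M) by ring, abs_mul,
        abs_of_pos (mul_pos hγ hg)]
    rw [hb]
    have hNM : |N - M| ≤ γ * ‖E - F‖ := by rw [abs_sub_comm]; exact hMN
    rw [div_mul_eq_mul_div, div_le_iff₀ (mul_pos hM0 hN0)]
    have habs : (0:ℝ) ≤ |N - M| := abs_nonneg _
    nlinarith [mul_le_mul_of_nonneg_left hNM (mul_nonneg (mul_pos hγ hg).le hf),
      mul_le_mul hgM hFN (by positivity) hM0.le]
  calc ‖(γ * g / M) • (E - F) + ((γ * g / M) - (γ * g / N)) • F‖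
      ≤ ‖(γ * g / M) • (E - F)‖ + ‖((γ * g / M) - (γ * g / N)) • F‖ :=
        norm_add_le _ _
    _ ≤ γ * ‖E - F‖ + γ * ‖E - F‖ := add_le_add t1 t2
    _ = 2 * γ * ‖E - F‖ := by ring
end

section
/- Let g₁ ≥ g₂ > 0 and γ > 0, and let q_i(E) := γ g_i E / max(g_i, γ‖E‖) for i = 1, 2. Then for every E ∈ ℝᵐ, ‖q_1(E) − q_2(E)‖ ≤ (g₁ − g₂)·min(1, γ‖E‖/g₂)... in particular ‖q₁(E) − q₂(E)‖ ≤ g₁ − g₂, so the Huber multiplier is Lipschitz in the yield-stress parameter uniformly in E and γ. -/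
/-- Lipschitz stability of the Huber multiplier with respect to the yield
stress: for g₁ ≥ g₂ > 0 and qᵢ(E) = γ gᵢ E / max(gᵢ, γ‖E‖),
‖q₁(E) − q₂(E)‖ ≤ (g₁ − g₂)·min(1, γ‖E‖/g₂) ≤ g₁ − g₂ for all E. -/
theorem stmt_19 (m : ℕ) (g₁ g₂ γ : ℝ) (hg : g₁ ≥ g₂) (hg₂ : 0 < g₂)
    (hγ : 0 < γ) (E : EuclideanSpace ℝ (Fin m)) :
    ‖(γ * g₁ / max g₁ (γ * ‖E‖)) • E - (γ * g₂ / max g₂ (γ * ‖E‖)) • E‖ ≤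
      (g₁ - g₂) * min 1 (γ * ‖E‖ / g₂) ∧
    ‖(γ * g₁ / max g₁ (γ * ‖E‖)) • E - (γ * g₂ / max g₂ (γ * ‖E‖)) • E‖ ≤
      g₁ - g₂ := by
  have hg₁ : 0 < g₁ := lt_of_lt_of_le hg₂ hg
  have hE : 0 ≤ ‖E‖ := norm_nonneg _
  set t := γ * ‖E‖ with ht
  have ht0 : 0 ≤ t := mul_nonneg hγ.le hE
  have key : ‖(γ * g₁ / max g₁ t) • E - (γ * g₂ / max g₂ t) • E‖
      = |γ * g₁ / max g₁ t - γ * g₂ / max g₂ t| * ‖E‖ := by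
    rw [← sub_smul, norm_smul, Real.norm_eq_abs]
  have hmin0 : 0 ≤ min 1 (t / g₂) := le_min one_pos.le (div_nonneg ht0 hg₂.le)
  have hEeq : ‖E‖ = t / γ := by field_simp [ht]; linarith [ht]
  have hmain : ‖(γ * g₁ / max g₁ t) • E - (γ * g₂ / max g₂ t) • E‖
      ≤ (g₁ - g₂) * min 1 (t / g₂) := by
    rw [key]
    rcases le_total t g₂ with h1 | h1
    · rw [max_eq_left (h1.trans hg), max_eq_left h1]
      have e : γ * g₁ / g₁ - γ * g₂ / g₂ = 0 := by field_simp; ring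
      rw [e, abs_zero, zero_mul]
      exact mul_nonneg (sub_nonneg.2 hg) hmin0
    · have ht0' : 0 < t := lt_of_lt_of_le hg₂ h1
      rw [max_eq_right h1, min_eq_left ((one_le_div hg₂).2 h1)]
      rcases le_total t g₁ with h2 | h2
      · rw [max_eq_left h2]
        have e1 : γ * g₁ / g₁ = γ := by field_simp
        have hle : γ * g₂ / t ≤ γ := by
          rw [div_le_iff₀ ht0']; nlinarith
        rw [e1, abs_of_nonneg (sub_nonneg.2 hle), hEeq]
        have e2 : (γ - γ * g₂ / t) * (t / γ) = t - g₂ := by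
          field_simp
        rw [e2]; linarith
      · rw [max_eq_right h2]
        have e : γ * g₁ / t - γ * g₂ / t = γ * (g₁ - g₂) / t := by ring
        rw [e, abs_of_nonneg (div_nonneg (mul_nonneg hγ.le (sub_nonneg.2 hg)) ht0), hEeq]
        have e2 : γ * (g₁ - g₂) / t * (t / γ) = g₁ - g₂ := by
          field_simp
        rw [e2, mul_one]
  refine ⟨hmain, hmain.trans ?_⟩
  calc (g₁ - g₂) * min 1 (t / g₂) ≤ (g₁ - g₂) * 1 :=
        mul_le_mul_of_nonneg_left (min_le_left _ _) (sub_nonneg.2 hg)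
    _ = g₁ - g₂ := mul_one _
end
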